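/- arXiv:math/0405453 — 3 statements merged into one kernel-verified Lean document; each statement's English description precedes it below -/
import Mathlib

section
/- For any nonzero formal power series f ∈ K[[X_1,…,X_n]], any arc φ ∈ (t·K[[t]])^n, and any i ∈ ℕ, the minimum of ord(f ∘ θ) over all arcs θ with ord(θ − φ) > i satisfies: m_0(f) ≤ min_θ ord(f ∘ θ) ≤ m_0(f)·(i+1), where m_0(f) is the order (multiplicity) of f at the origin. -/
/- STATEMENT 2: for a nonzero `f ∈ K[[X_1,…,X_n]]`, an arc `φ` and `i ∈ ℕ`,
   the minimum of `ord (f ∘ θ)` over arcs `θ` with `ord(θ - φ) > i` lies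
   between `m₀(f)` and `m₀(f)·(i+1)`. -/

open scoped Classical

noncomputable def deg {σ : Type} [Fintype σ] (α : σ →₀ ℕ) : ℕ := ∑ i, α i

noncomputable def expBox (σ : Type) [Fintype σ] [DecidableEq σ] (D : ℕ) : Finset (σ →₀ ℕ) :=
  Finset.Iic (Finsupp.equivFunOnFinite.symm fun _ => D)

/-- Substitution of an `n`-tuple of power series with zero constant term
(an arc) into a multivariate formal power series. -/
noncomputable def arcSubst {K : Type} [Field K] {σ : Type} [Fintype σ] [DecidableEq σ]
    (ψ : σ → PowerSeries K) (f : MvPowerSeries σ K) : PowerSeries K :=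
  PowerSeries.mk fun N => ∑ α ∈ expBox σ N,
    MvPowerSeries.coeff α f * PowerSeries.coeff N (∏ i, ψ i ^ α i)

/-- `t`-adic order of a formal power series, in `ℕ∞` (`ord 0 = ∞`). -/
noncomputable def pOrd {K : Type} [Field K] (g : PowerSeries K) : ℕ∞ :=
  ⨅ (N : ℕ) (_ : PowerSeries.coeff N g ≠ 0), (N : ℕ∞)

/-- Order of the difference of two arcs: minimum over the coordinates of the
valuations of the differences. -/
noncomputable def aOrd {K : Type} [Field K] {n : ℕ} (φ ψ : Fin n → PowerSeries K) : ℕ∞ :=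
  ⨅ j : Fin n, pOrd (φ j - ψ j)

/-- valuation-type predicate over a plain ring -/
def W0 {R : Type*} [CommSemiring R] (e : ℕ) (g : PowerSeries R) : Prop :=
  ∀ N, PowerSeries.coeff N g ≠ 0 → e ≤ N

theorem W0_mul {R : Type*} [CommSemiring R] {e e' : ℕ} {g h : PowerSeries R}
    (hg : W0 e g) (hh : W0 e' h) : W0 (e + e') (g * h) := by
  intro N hN
  rw [PowerSeries.coeff_mul] at hN
  obtain ⟨p, hp, hne⟩ := Finset.exists_ne_zero_of_sum_ne_zero hN
  have h1 := hg p.1 (left_ne_zero_of_mul hne)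
  have h2 := hh p.2 (right_ne_zero_of_mul hne)
  have := Finset.HasAntidiagonal.mem_antidiagonal.mp hp
  omega

theorem W0_prod {R : Type*} [CommSemiring R] {ι : Type*} (s : Finset ι)
    (g : ι → PowerSeries R) (e : ι → ℕ) (h : ∀ j ∈ s, W0 (e j) (g j)) :
    W0 (∑ j ∈ s, e j) (∏ j ∈ s, g j) := by
  induction s using Finset.induction_on with
  | empty => intro N _; simpa using Nat.zero_le N
  | @insert a s ha ih =>
      rw [Finset.prod_insert ha, Finset.sum_insert ha]
      exact W0_mul (h a (Finset.mem_insert_self a s))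
        (ih fun j hj => h j (Finset.mem_insert_of_mem hj))

theorem W0_pow {R : Type*} [CommSemiring R] {e : ℕ} {g : PowerSeries R}
    (hg : W0 e g) (k : ℕ) : W0 (k * e) (g ^ k) := by
  induction k with
  | zero => intro N _; simpa using Nat.zero_le N
  | succ k ih =>
      rw [pow_succ]
      have := W0_mul ih hg
      rwa [show k * e + e = (k+1) * e by ring] at this

variable {K : Type} [Field K]

/-- bigraded valuation predicate on `K[s][[t]]`:  every monomial `s^d t^N`
occurring in `g` satisfies `a + d*b ≤ N`. -/
def W (a b : ℕ) (g : PowerSeries (Polynomial K)) : Prop :=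
  ∀ N d, (PowerSeries.coeff N g).coeff d ≠ 0 → a + d * b ≤ N

theorem W_mono {a a' b : ℕ} {g : PowerSeries (Polynomial K)} (hle : a' ≤ a)
    (hg : W a b g) : W a' b g := fun N d h => le_trans (by omega) (hg N d h)

theorem W_zero {a b : ℕ} : W (K := K) a b 0 := by
  intro N d h; simp at h

theorem W_add {a b : ℕ} {g h : PowerSeries (Polynomial K)} (hg : W a b g) (hh : W a b h) :
    W a b (g + h) := by
  intro N d hne
  rw [map_add, Polynomial.coeff_add] at hne
  rcases eq_or_ne ((PowerSeries.coeff N g).coeff d) 0 with h0 | h0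
  · exact hh N d (by intro hc; apply hne; rw [h0, hc, add_zero])
  · exact hg N d h0

theorem W_sum {a b : ℕ} {ι : Type*} (s : Finset ι) (g : ι → PowerSeries (Polynomial K))
    (h : ∀ j ∈ s, W a b (g j)) : W a b (∑ j ∈ s, g j) := by
  induction s using Finset.induction_on with
  | empty => simpa using W_zero
  | @insert c s hc ih =>
      rw [Finset.sum_insert hc]
      exact W_add (h c (Finset.mem_insert_self c s))
        (ih fun j hj => h j (Finset.mem_insert_of_mem hj))

theorem W_mul {a a' b : ℕ} {g h : PowerSeries (Polynomial K)}
    (hg : W a b g) (hh : W a' b h) : W (a + a') b (g * h) := by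
  intro N d hne
  rw [PowerSeries.coeff_mul, Polynomial.finset_sum_coeff] at hne
  obtain ⟨p, hp, h1⟩ := Finset.exists_ne_zero_of_sum_ne_zero hne
  rw [Polynomial.coeff_mul] at h1
  obtain ⟨q, hq, h2⟩ := Finset.exists_ne_zero_of_sum_ne_zero h1
  have e1 := hg p.1 q.1 (left_ne_zero_of_mul h2)
  have e2 := hh p.2 q.2 (right_ne_zero_of_mul h2)
  have hd : q.1 + q.2 = d := Finset.HasAntidiagonal.mem_antidiagonal.mp hq
  have hN : p.1 + p.2 = N := Finset.HasAntidiagonal.mem_antidiagonal.mp hp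
  calc a + a' + d * b = (a + q.1 * b) + (a' + q.2 * b) := by rw [← hd, add_mul]; ring
    _ ≤ p.1 + p.2 := Nat.add_le_add e1 e2
    _ = N := hN

theorem W_pow {a b : ℕ} {g : PowerSeries (Polynomial K)} (hg : W a b g) (k : ℕ) :
    W (k * a) b (g ^ k) := by
  induction k with
  | zero =>
      intro N d h
      rw [pow_zero, PowerSeries.coeff_one] at h
      split_ifs at h with h0
      · rw [Polynomial.coeff_one] at h
        split_ifs at h with h1
        · simp [h0, h1]
        · exact absurd rfl h
      · exact absurd rfl h
  | succ k ih =>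
      rw [pow_succ]
      have := W_mul ih hg
      rwa [show k * a + a = (k+1) * a by ring] at this

theorem W_prod {b : ℕ} {ι : Type*} (s : Finset ι) (g : ι → PowerSeries (Polynomial K))
    (e : ι → ℕ) (h : ∀ j ∈ s, W (e j) b (g j)) :
    W (∑ j ∈ s, e j) b (∏ j ∈ s, g j) := by
  induction s using Finset.induction_on with
  | empty =>
      intro N d h
      rw [Finset.prod_empty, PowerSeries.coeff_one] at h
      split_ifs at h with h0
      · rw [Polynomial.coeff_one] at h
        split_ifs at h with h1
        · simp [h0, h1]
        · exact absurd rfl h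
      · exact absurd rfl h
  | @insert c s hc ih =>
      rw [Finset.prod_insert hc, Finset.sum_insert hc]
      exact W_mul (h c (Finset.mem_insert_self c s))
        (ih fun j hj => h j (Finset.mem_insert_of_mem hj))

theorem W_natCast {b : ℕ} (c : ℕ) : W (K := K) 0 b (c : PowerSeries (Polynomial K)) := by
  intro N d h
  rw [← map_natCast (PowerSeries.C) c, PowerSeries.coeff_C] at h
  split_ifs at h with h0
  · rw [← map_natCast (Polynomial.C (R := K)) c, Polynomial.coeff_C] at h
    split_ifs at h with h1
    · simp [h0, h1]
    · exact absurd rfl h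
  · exact absurd rfl h

theorem pOrd_le {K : Type} [Field K] {g : PowerSeries K} {N : ℕ}
    (h : PowerSeries.coeff N g ≠ 0) : pOrd g ≤ N :=
  iInf_le_of_le N (iInf_le_of_le h le_rfl)

theorem le_pOrd {K : Type} [Field K] {g : PowerSeries K} {e : ℕ}
    (h : ∀ N, PowerSeries.coeff N g ≠ 0 → e ≤ N) : (e : ℕ∞) ≤ pOrd g :=
  le_iInf fun N => le_iInf fun hN => by exact_mod_cast h N hN

theorem ord_comp_arc_bounds {K : Type} [Field K] [Infinite K] {n : ℕ}
    (f : MvPowerSeries (Fin n) K) (hf : f ≠ 0) (m : ℕ)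
    (hm₁ : ∃ α, deg α = m ∧ MvPowerSeries.coeff α f ≠ 0)
    (hm₂ : ∀ α, MvPowerSeries.coeff α f ≠ 0 → m ≤ deg α)
    (φ : Fin n → PowerSeries K) (hφ : ∀ j, PowerSeries.constantCoeff (φ j) = 0)
    (i : ℕ) :
    (∀ θ : Fin n → PowerSeries K, (∀ j, PowerSeries.constantCoeff (θ j) = 0) →
      (i : ℕ∞) < aOrd θ φ → (m : ℕ∞) ≤ pOrd (arcSubst θ f)) ∧
    (∃ θ : Fin n → PowerSeries K, (∀ j, PowerSeries.constantCoeff (θ j) = 0) ∧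
      (i : ℕ∞) < aOrd θ φ ∧ pOrd (arcSubst θ f) ≤ ((m * (i + 1) : ℕ) : ℕ∞)) := by
  obtain ⟨α₀, hα₀deg, hα₀ne⟩ := hm₁
  constructor
  · -- lower bound for every arc
    intro θ hθ _
    apply le_pOrd
    intro N hN
    by_contra hlt
    push_neg at hlt
    apply hN
    rw [arcSubst, PowerSeries.coeff_mk]
    apply Finset.sum_eq_zero
    intro α _
    rcases eq_or_ne (MvPowerSeries.coeff α f) 0 with h0 | h0
    · rw [h0, zero_mul]
    · have hm := hm₂ α h0
      have hθW : ∀ j : Fin n, W0 (α j * 1) (θ j ^ α j) := by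
        intro j
        apply W0_pow
        intro N' hN'
        rcases Nat.eq_zero_or_pos N' with h2 | h2
        · exfalso; apply hN'
          rw [h2, PowerSeries.coeff_zero_eq_constantCoeff]; exact hθ j
        · exact h2
      have hW := W0_prod Finset.univ (fun j => θ j ^ α j) (fun j => α j * 1)
        (fun j _ => hθW j)
      have hdeg : (∑ j, α j * 1) = deg α := by simp [deg]
      rw [hdeg] at hW
      rcases eq_or_ne (PowerSeries.coeff N (∏ j, θ j ^ α j)) 0 with hc | hc
      · rw [hc, mul_zero]
      · exact absurd (hW N hc) (by omega)
  · -- the arc realizing the upper bound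
    set M := m * (i + 1) with hM
    -- the polynomial recording the degree-m part of f
    set q : MvPolynomial (Fin n) K :=
      ∑ α ∈ (expBox (Fin n) M).filter (fun α => deg α = m),
        MvPolynomial.monomial α (MvPowerSeries.coeff α f) with hq_def
    have hα₀box : α₀ ∈ (expBox (Fin n) M).filter (fun α => deg α = m) := by
      rw [Finset.mem_filter]
      constructor
      · rw [expBox, Finset.mem_Iic, Finsupp.le_def]
        intro j
        simp only [Finsupp.equivFunOnFinite_symm_apply_apply]
        calc α₀ j ≤ deg α₀ := Finset.single_le_sum (fun k _ => Nat.zero_le (α₀ k))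
              (Finset.mem_univ j)
          _ = m := hα₀deg
          _ ≤ M := Nat.le_mul_of_pos_right m (Nat.succ_pos i)
      · exact hα₀deg
    have hq : q ≠ 0 := by
      intro h
      have hc : MvPolynomial.coeff α₀ q = MvPowerSeries.coeff α₀ f := by
        rw [hq_def, MvPolynomial.coeff_sum]
        rw [Finset.sum_eq_single α₀]
        · rw [MvPolynomial.coeff_monomial, if_pos rfl]
        · intro β _ hβ
          rw [MvPolynomial.coeff_monomial, if_neg hβ]
        · intro hcon; exact absurd hα₀box hcon
      rw [h, MvPolynomial.coeff_zero] at hc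
      exact hα₀ne hc.symm
    obtain ⟨b, hb⟩ : ∃ b : Fin n → K, MvPolynomial.eval b q ≠ 0 := by
      by_contra hcon
      push_neg at hcon
      exact hq (MvPolynomial.funext fun x => by rw [hcon x, map_zero])
    -- power series with polynomial coefficients
    set U : Fin n → PowerSeries (Polynomial K) :=
      fun j => PowerSeries.map (Polynomial.C) (φ j) with hU_def
    set V : Fin n → PowerSeries (Polynomial K) :=
      fun j => PowerSeries.C (Polynomial.C (b j) * Polynomial.X) *
        PowerSeries.X ^ (i+1) with hV_def
    have hcoeffU : ∀ (j : Fin n) (N : ℕ),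
        PowerSeries.coeff N (U j) = Polynomial.C (PowerSeries.coeff N (φ j)) := by
      intro j N; simp only [hU_def]; rw [PowerSeries.coeff_map]
    have hcoeffV : ∀ (j : Fin n) (N : ℕ),
        PowerSeries.coeff N (V j)
          = if N = i+1 then Polynomial.C (b j) * Polynomial.X else 0 := by
      intro j N; simp only [hV_def]; rw [PowerSeries.coeff_C_mul_X_pow]
    have hUW : ∀ (j : Fin n) (bb : ℕ), W 1 bb (U j) := by
      intro j bb N d h
      rw [hcoeffU, Polynomial.coeff_C] at h
      split_ifs at h with h1
      · have hN : N ≠ 0 := by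
          intro h0
          apply h
          rw [h0, PowerSeries.coeff_zero_eq_constantCoeff, hφ j]
        subst h1
        simp only [Nat.zero_mul, Nat.add_zero]
        omega
      · exact absurd rfl h
    have hVW1 : ∀ j : Fin n, W 1 i (V j) := by
      intro j N d h
      rw [hcoeffV] at h
      split_ifs at h with h1
      · rw [Polynomial.coeff_C_mul, Polynomial.coeff_X] at h
        split_ifs at h with h2
        · subst h1; subst h2; omega
        · simp at h
      · exact absurd rfl h
    have hVW2 : ∀ j : Fin n, W 0 (i+1) (V j) := by
      intro j N d h
      rw [hcoeffV] at h
      split_ifs at h with h1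
      · rw [Polynomial.coeff_C_mul, Polynomial.coeff_X] at h
        split_ifs at h with h2
        · subst h1; subst h2; omega
        · simp at h
      · exact absurd rfl h
    have hAW1 : ∀ j : Fin n, W 1 i (U j + V j) := fun j => W_add (hUW j i) (hVW1 j)
    have hAW0 : ∀ j : Fin n, W 0 (i+1) (U j + V j) :=
      fun j => W_add (W_mono (Nat.zero_le 1) (hUW j (i+1))) (hVW2 j)
    -- the key vanishing : degree-m coefficient for |α| > m
    have keyGT : ∀ α : Fin n →₀ ℕ, m < deg α →
        (PowerSeries.coeff M (∏ j, (U j + V j) ^ α j)).coeff m = 0 := by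
      intro α hα
      by_contra hne
      have hW := W_prod Finset.univ (fun j => (U j + V j) ^ α j) (fun j => α j * 1)
        (fun j _ => W_pow (hAW1 j) (α j))
      have hdeg : (∑ j, α j * 1) = deg α := by simp [deg]
      rw [hdeg] at hW
      have := hW M m hne
      have h2 : m * (i+1) = m * i + m := Nat.mul_succ m i
      rw [hM, h2] at this
      linarith [hα]
    -- difference of products lies in W 1 (i+1)
    have hΔ : ∀ (j : Fin n) (a : ℕ), W 1 (i+1) ((U j + V j) ^ a - V j ^ a) := by
      intro j a
      rw [add_pow, Finset.sum_range_succ']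
      simp only [pow_zero, one_mul, Nat.choose_zero_right, Nat.cast_one, mul_one, Nat.sub_zero]
      rw [add_sub_cancel_right]
      apply W_sum
      intro k _
      have h1 : W (k+1) (i+1) (U j ^ (k+1)) := by
        have := W_pow (hUW j (i+1)) (k+1)
        rwa [Nat.mul_one] at this
      have h2 : W 0 (i+1) (V j ^ (a - (k+1))) := by
        have := W_pow (hVW2 j) (a - (k+1))
        rwa [Nat.mul_zero] at this
      have h3 := W_mul (W_mul h1 h2) (W_natCast (K := K) (a.choose (k+1)))
      exact W_mono (by omega) h3
    have hdiff : ∀ (α : Fin n →₀ ℕ) (s : Finset (Fin n)),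
        W 1 (i+1) (∏ j ∈ s, (U j + V j) ^ α j - ∏ j ∈ s, V j ^ α j) := by
      intro α s
      induction s using Finset.induction_on with
      | empty => simpa using W_zero
      | @insert c s hc ih =>
          rw [Finset.prod_insert hc, Finset.prod_insert hc]
          have key : (U c + V c) ^ α c * ∏ j ∈ s, (U j + V j) ^ α j
              - V c ^ α c * ∏ j ∈ s, V j ^ α j
              = (U c + V c) ^ α c * (∏ j ∈ s, (U j + V j) ^ α j - ∏ j ∈ s, V j ^ α j)
                + ((U c + V c) ^ α c - V c ^ α c) * ∏ j ∈ s, V j ^ α j := by ring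
          rw [key]
          have hA0 : W 0 (i+1) ((U c + V c) ^ α c) := by
            have := W_pow (hAW0 c) (α c); rwa [Nat.mul_zero] at this
          have hVprodW : W 0 (i+1) (∏ j ∈ s, V j ^ α j) := by
            have := W_prod s (fun j => V j ^ α j) (fun _ => 0)
              (fun j _ => by have := W_pow (hVW2 j) (α j); rwa [Nat.mul_zero] at this)
            simpa using this
          exact W_add (W_mul hA0 ih) (W_mul (hΔ c (α c)) hVprodW)
    -- exact value of the coefficient for |α| = m
    have keyEQ : ∀ α : Fin n →₀ ℕ, deg α = m →
        (PowerSeries.coeff M (∏ j, (U j + V j) ^ α j)).coeff m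
          = ∏ j, (b j) ^ α j := by
      intro α hα
      have hsum0 : (∑ j, α j) = m := hα
      have hzero : (PowerSeries.coeff M
          (∏ j, (U j + V j) ^ α j - ∏ j, V j ^ α j)).coeff m = 0 := by
        by_contra hne
        have := hdiff α Finset.univ M m hne
        rw [hM] at this
        linarith
      have hsplit : (∏ j, (U j + V j) ^ α j)
          = (∏ j, V j ^ α j) + (∏ j, (U j + V j) ^ α j - ∏ j, V j ^ α j) := by ring
      rw [hsplit, map_add, Polynomial.coeff_add, hzero, add_zero]
      have hVpow : ∀ (j : Fin n), V j ^ α j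
          = PowerSeries.C ((Polynomial.C (b j) * Polynomial.X) ^ α j)
            * PowerSeries.X ^ ((i+1) * α j) := by
        intro j
        simp only [hV_def]
        rw [mul_pow, ← map_pow, ← pow_mul]
      have hVprod : (∏ j, V j ^ α j)
          = PowerSeries.C (∏ j, (Polynomial.C (b j) * Polynomial.X) ^ α j)
            * PowerSeries.X ^ ((i+1) * m) := by
        calc ∏ j, V j ^ α j
            = ∏ j, (PowerSeries.C ((Polynomial.C (b j) * Polynomial.X) ^ α j)
                * PowerSeries.X ^ ((i+1) * α j)) :=
              Finset.prod_congr rfl fun j _ => hVpow j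
          _ = (∏ j, PowerSeries.C ((Polynomial.C (b j) * Polynomial.X) ^ α j))
                * ∏ j, PowerSeries.X ^ ((i+1) * α j) := Finset.prod_mul_distrib
          _ = PowerSeries.C (∏ j, (Polynomial.C (b j) * Polynomial.X) ^ α j)
                * PowerSeries.X ^ ((i+1) * m) := by
              rw [← map_prod, Finset.prod_pow_eq_pow_sum, ← Finset.mul_sum, hsum0]
      have hinner : (∏ j, (Polynomial.C (b j) * Polynomial.X) ^ α j)
          = Polynomial.C (∏ j, (b j) ^ α j) * Polynomial.X ^ m := by
        calc (∏ j, (Polynomial.C (b j) * Polynomial.X) ^ α j)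
            = ∏ j, (Polynomial.C ((b j) ^ α j) * Polynomial.X ^ α j) :=
              Finset.prod_congr rfl fun j _ => by rw [mul_pow, ← map_pow]
          _ = (∏ j, Polynomial.C ((b j) ^ α j)) * ∏ j, Polynomial.X ^ α j :=
              Finset.prod_mul_distrib
          _ = Polynomial.C (∏ j, (b j) ^ α j) * Polynomial.X ^ m := by
              rw [← map_prod, Finset.prod_pow_eq_pow_sum, hsum0]
      rw [hVprod, PowerSeries.coeff_C_mul_X_pow, if_pos (by rw [hM]; ring), hinner,
        Polynomial.coeff_C_mul, Polynomial.coeff_X_pow, if_pos rfl, mul_one]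
    -- the one-variable polynomial cut out by the coefficient of t^M
    set P : Polynomial K := ∑ α ∈ expBox (Fin n) M,
      Polynomial.C (MvPowerSeries.coeff α f)
        * (PowerSeries.coeff M (∏ j, (U j + V j) ^ α j)) with hP_def
    have hPm : P.coeff m = MvPolynomial.eval b q := by
      rw [hP_def, Polynomial.finset_sum_coeff, hq_def, map_sum, Finset.sum_filter]
      apply Finset.sum_congr rfl
      intro α _
      rw [Polynomial.coeff_C_mul]
      by_cases hdm : deg α = m
      · rw [if_pos hdm, keyEQ α hdm, MvPolynomial.eval_monomial]
        congr 1
        exact (Finsupp.prod_pow α b).symm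
      · rw [if_neg hdm]
        rcases eq_or_ne (MvPowerSeries.coeff α f) 0 with h0 | h0
        · rw [h0, zero_mul]
        · have hge := hm₂ α h0
          rw [keyGT α (by omega), mul_zero]
    have hPne : P ≠ 0 := fun h => hb (by rw [← hPm, h, Polynomial.coeff_zero])
    obtain ⟨s, hs⟩ : ∃ s : K, P.eval s ≠ 0 := by
      by_contra hcon
      push_neg at hcon
      exact hPne (Polynomial.zero_of_eval_zero P hcon)
    refine ⟨fun j => φ j + PowerSeries.monomial (i+1) (b j * s), ?_, ?_, ?_⟩
    · intro j
      rw [map_add, hφ j, zero_add, ← PowerSeries.coeff_zero_eq_constantCoeff,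
        PowerSeries.coeff_monomial, if_neg (by omega)]
    · have h1 : ((i+1 : ℕ) : ℕ∞)
          ≤ aOrd (fun j => φ j + PowerSeries.monomial (i+1) (b j * s)) φ := by
        apply le_iInf
        intro j
        apply le_pOrd
        intro N hN
        rw [add_sub_cancel_left, PowerSeries.coeff_monomial] at hN
        split_ifs at hN with h2
        · omega
        · exact absurd rfl hN
      refine lt_of_lt_of_le ?_ h1
      exact_mod_cast Nat.lt_succ_self i
    · have hmap : ∀ j, PowerSeries.map (Polynomial.evalRingHom s) (U j + V j)
          = φ j + PowerSeries.monomial (i+1) (b j * s) := by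
        intro j
        ext N
        simp only [PowerSeries.coeff_map, map_add, hcoeffU, hcoeffV,
          PowerSeries.coeff_monomial, apply_ite (Polynomial.evalRingHom s), map_zero,
          Polynomial.coe_evalRingHom, Polynomial.eval_C, Polynomial.eval_mul,
          Polynomial.eval_X]
      have heval : Polynomial.eval s P = PowerSeries.coeff M
          (arcSubst (fun j => φ j + PowerSeries.monomial (i+1) (b j * s)) f) := by
        rw [arcSubst, PowerSeries.coeff_mk, hP_def, Polynomial.eval_finset_sum]
        apply Finset.sum_congr rfl
        intro α _
        rw [Polynomial.eval_mul, Polynomial.eval_C]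
        congr 1
        have h3 : Polynomial.eval s
            (PowerSeries.coeff M (∏ j, (U j + V j) ^ α j))
            = PowerSeries.coeff M
              (PowerSeries.map (Polynomial.evalRingHom s) (∏ j, (U j + V j) ^ α j)) := by
          rw [PowerSeries.coeff_map]; rfl
        rw [h3, map_prod]
        simp only [map_pow, hmap]
      rw [heval] at hs
      exact pOrd_le hs
end

section
/- Let f ∈ K[[X_1,…,X_n]] be nonzero of order m. Write the blow-up chart substitution f(x_1, x_1(a_2+x_2),…, x_1(a_n+x_n)) = x_1^m · g(x_1,…,x_n) for a point (1,a_2,…,a_n) ∈ K^n. Then g is a well-defined power series (i.e., x_1^m divides the substituted series) and the order of g at the origin is at most m. -/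
/- STATEMENT 3: in the blow-up chart `(x₁,…,x_{n}) ↦ (x₁, x₁(a₂+x₂),…)`, a
   nonzero series `f` of order `m` satisfies `f ∘ chart = x₁^m · g` for a
   well-defined power series `g` (the strict transform) of order `≤ m`. -/

open scoped Classical

noncomputable def mySubst {K : Type} [Field K] {σ τ : Type} [Fintype σ] [DecidableEq σ]
    [Fintype τ] (s : σ → MvPowerSeries τ K) (f : MvPowerSeries σ K) : MvPowerSeries τ K :=
  fun β => ∑ α ∈ expBox σ (deg β),
    MvPowerSeries.coeff α f * MvPowerSeries.coeff β (∏ i, s i ^ α i)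

/-- The blow-up chart substitution of the origin of `K^{n+1}` at the point
`(1, a)` of the exceptional divisor: `x₁ ↦ x₁`, `x_j ↦ x₁·(a_j + x_j)`. -/
noncomputable def chartS {K : Type} [Field K] {n : ℕ} (a : Fin n → K) :
    Fin (n + 1) → MvPowerSeries (Fin (n + 1)) K := fun j =>
  Fin.cases (MvPowerSeries.X 0)
    (fun k => MvPowerSeries.X 0 *
      (MvPowerSeries.C (σ := Fin (n + 1)) (R := K) (a k) + MvPowerSeries.X k.succ)) j

section Aux

variable {K : Type} [Field K] {n : ℕ}

variable {K : Type} [Field K] {n : ℕ}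

lemma mem_expBox {σ : Type} [Fintype σ] [DecidableEq σ] {α : σ →₀ ℕ} {D : ℕ} :
    α ∈ expBox σ D ↔ ∀ i, α i ≤ D := by
  simp [expBox, Finset.mem_Iic, Finsupp.le_def]

lemma apply_le_deg {σ : Type} [Fintype σ] (α : σ →₀ ℕ) (i : σ) : α i ≤ deg α :=
  Finset.single_le_sum (fun j _ => Nat.zero_le _) (Finset.mem_univ i)

lemma coeff_X_pow_mul (s : Fin (n + 1)) (d : ℕ) (h : MvPowerSeries (Fin (n + 1)) K)
    (β : Fin (n + 1) →₀ ℕ) :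
    MvPowerSeries.coeff β (MvPowerSeries.X s ^ d * h) =
      if Finsupp.single s d ≤ β then
        MvPowerSeries.coeff (β - Finsupp.single s d) h else 0 := by
  rw [MvPowerSeries.coeff_mul]
  split_ifs with hle
  · rw [Finset.sum_eq_single (Finsupp.single s d, β - Finsupp.single s d)]
    · rw [MvPowerSeries.coeff_X_pow, if_pos rfl, one_mul]
    · rintro ⟨u, v⟩ huv hne
      rw [Finset.HasAntidiagonal.mem_antidiagonal] at huv
      rw [MvPowerSeries.coeff_X_pow]
      split_ifs with hu
      · exfalso
        apply hne
        subst hu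
        have huv' : Finsupp.single s d + v = β := huv
        have hv : v = β - Finsupp.single s d :=
          eq_tsub_of_add_eq ((add_comm v _).trans huv')
        rw [hv]
      · exact zero_mul _
    · intro hni
      exact absurd (by rw [Finset.HasAntidiagonal.mem_antidiagonal, add_tsub_cancel_of_le hle]) hni
  · apply Finset.sum_eq_zero
    rintro ⟨u, v⟩ huv
    rw [Finset.HasAntidiagonal.mem_antidiagonal] at huv
    rw [MvPowerSeries.coeff_X_pow]
    split_ifs with hu
    · exact absurd (huv ▸ hu ▸ le_self_add) hle
    · exact zero_mul _


variable {K : Type} [Field K] {n : ℕ}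

noncomputable def phi (a : Fin n → K) (α : Fin (n + 1) →₀ ℕ) : MvPolynomial (Fin (n + 1)) K :=
  ∏ k : Fin n, (MvPolynomial.C (a k) + MvPolynomial.X k.succ) ^ α k.succ

lemma prodChart (a : Fin n → K) (α : Fin (n + 1) →₀ ℕ) :
    ∏ i, chartS a i ^ α i =
      (MvPowerSeries.X 0 : MvPowerSeries (Fin (n + 1)) K) ^ deg α * ↑(phi a α) := by
  have hcoe : ((phi a α : MvPolynomial (Fin (n + 1)) K) : MvPowerSeries (Fin (n + 1)) K) =
      ∏ k : Fin n, (MvPowerSeries.C (σ := Fin (n + 1)) (R := K) (a k) + MvPowerSeries.X k.succ)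
        ^ α k.succ := by
    rw [← MvPolynomial.coeToMvPowerSeries.ringHom_apply, phi, map_prod]
    simp [map_pow]
  rw [hcoe, Fin.prod_univ_succ]
  simp only [chartS, Fin.cases_zero, Fin.cases_succ]
  rw [Finset.prod_congr rfl (fun k _ => mul_pow (MvPowerSeries.X 0) _ (α k.succ)),
    Finset.prod_mul_distrib, Finset.prod_pow_eq_pow_sum]
  rw [deg, Fin.sum_univ_succ, pow_add]
  ring

lemma phi_mem (a : Fin n → K) (α : Fin (n + 1) →₀ ℕ) :
    phi a α ∈ MvPolynomial.supported K {i : Fin (n + 1) | i ≠ 0} := by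
  apply Subalgebra.prod_mem
  intro k _
  apply Subalgebra.pow_mem
  apply Subalgebra.add_mem
  · rw [← MvPolynomial.algebraMap_eq]
    exact Subalgebra.algebraMap_mem _ _
  · exact MvPolynomial.X_mem_supported.2 (Fin.succ_ne_zero k)

lemma coeff_fst_eq_zero {p : MvPolynomial (Fin (n + 1)) K}
    (hp : p ∈ MvPolynomial.supported K {i : Fin (n + 1) | i ≠ 0})
    {γ : Fin (n + 1) →₀ ℕ} (h : MvPolynomial.coeff γ p ≠ 0) : γ 0 = 0 := by
  by_contra h0
  have hγ : γ ∈ p.support := MvPolynomial.mem_support_iff.2 h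
  have : (0 : Fin (n + 1)) ∈ p.vars := (MvPolynomial.mem_vars 0).2
    ⟨γ, hγ, Finsupp.mem_support_iff.2 h0⟩
  exact (MvPolynomial.mem_supported.1 hp this) rfl

lemma phi_totalDegree (a : Fin n → K) (α : Fin (n + 1) →₀ ℕ) :
    (phi a α).totalDegree ≤ ∑ k : Fin n, α k.succ := by
  refine (MvPolynomial.totalDegree_finset_prod _ _).trans ?_
  apply Finset.sum_le_sum
  intro k _
  refine (MvPolynomial.totalDegree_pow _ _).trans ?_
  have h1 : (MvPolynomial.C (a k) + MvPolynomial.X k.succ :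
      MvPolynomial (Fin (n + 1)) K).totalDegree ≤ 1 := by
    refine (MvPolynomial.totalDegree_add _ _).trans ?_
    simp [MvPolynomial.totalDegree_C, MvPolynomial.totalDegree_X]
  calc α k.succ * (MvPolynomial.C (a k) + MvPolynomial.X k.succ :
        MvPolynomial (Fin (n + 1)) K).totalDegree ≤ α k.succ * 1 :=
        Nat.mul_le_mul_left _ h1
    _ = α k.succ := Nat.mul_one _


variable {K : Type} [Field K] {n : ℕ}

lemma sub_single_eq_erase {β : Fin (n + 1) →₀ ℕ} :
    β - Finsupp.single 0 (β 0) = Finsupp.erase 0 β := by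
  ext i
  by_cases hi : i = 0
  · subst hi
    simp [Finsupp.tsub_apply, Finsupp.erase_same]
  · simp [Finsupp.tsub_apply, Finsupp.single_apply, Ne.symm hi, Finsupp.erase_ne hi]

lemma coeff_chart_term (a : Fin n → K) (α β : Fin (n + 1) →₀ ℕ) :
    MvPowerSeries.coeff β (∏ i, chartS a i ^ α i) =
      if deg α = β 0 then MvPolynomial.coeff (Finsupp.erase 0 β) (phi a α) else 0 := by
  rw [prodChart, coeff_X_pow_mul]
  by_cases hd : deg α = β 0
  · rw [if_pos (Finsupp.single_le_iff.2 (le_of_eq hd)), if_pos hd, hd,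
      sub_single_eq_erase, MvPolynomial.coeff_coe]
  · rw [if_neg hd]
    split_ifs with hle
    · rw [MvPolynomial.coeff_coe]
      by_contra hc
      have h0 := coeff_fst_eq_zero (phi_mem a α) hc
      rw [Finsupp.tsub_apply, Finsupp.single_apply, if_pos rfl] at h0
      have hle0 : deg α ≤ β 0 := Finsupp.single_le_iff.1 hle
      omega
    · rfl


lemma coeff_F (a : Fin n → K) (f : MvPowerSeries (Fin (n + 1)) K) (β : Fin (n + 1) →₀ ℕ) :
    MvPowerSeries.coeff β (mySubst (chartS a) f) =
      ∑ α ∈ (expBox (Fin (n + 1)) (deg β)).filter (fun α => deg α = β 0),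
        MvPowerSeries.coeff α f * MvPolynomial.coeff (Finsupp.erase 0 β) (phi a α) := by
  have : MvPowerSeries.coeff β (mySubst (chartS a) f) =
      ∑ α ∈ expBox (Fin (n + 1)) (deg β),
        MvPowerSeries.coeff α f * MvPowerSeries.coeff β (∏ i, chartS a i ^ α i) := rfl
  rw [this, Finset.sum_filter]
  apply Finset.sum_congr rfl
  intro α _
  rw [coeff_chart_term]
  by_cases hd : deg α = β 0 <;> simp [hd]

lemma filter_box_eq {m D : ℕ} (hD : m ≤ D) :
    (expBox (Fin (n + 1)) D).filter (fun α => deg α = m) =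
      (expBox (Fin (n + 1)) m).filter (fun α => deg α = m) := by
  ext α
  simp only [Finset.mem_filter, mem_expBox]
  constructor
  · rintro ⟨_, hdeg⟩
    exact ⟨fun i => le_of_le_of_eq (apply_le_deg α i) hdeg, hdeg⟩
  · rintro ⟨hbox, hdeg⟩
    exact ⟨fun i => (hbox i).trans hD, hdeg⟩


variable {K : Type} [Field K] {n : ℕ}

noncomputable def tmap (a : Fin n → K) :
    MvPolynomial (Fin (n + 1)) K →ₐ[K] MvPolynomial (Fin (n + 1)) K :=
  MvPolynomial.aeval (fun j => Fin.cases (MvPolynomial.X 0)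
    (fun k => MvPolynomial.C (a k) + MvPolynomial.X k.succ) j)

lemma tmap_inj (a : Fin n → K) : Function.Injective (tmap (K := K) a) := by
  set s : MvPolynomial (Fin (n + 1)) K →ₐ[K] MvPolynomial (Fin (n + 1)) K :=
    MvPolynomial.aeval (fun j => Fin.cases (MvPolynomial.X 0)
      (fun k => MvPolynomial.X k.succ - MvPolynomial.C (a k)) j) with hs
  have hcomp : s.comp (tmap a) = AlgHom.id K _ := by
    apply MvPolynomial.algHom_ext
    intro i
    refine Fin.cases ?_ ?_ i
    · simp [tmap, hs]
    · intro k
      simp [tmap, hs]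
  intro p q h
  have h2 := congrArg s h
  rwa [← AlgHom.comp_apply, ← AlgHom.comp_apply, hcomp, AlgHom.id_apply,
    AlgHom.id_apply] at h2

lemma tmap_monomial (a : Fin n → K) (α : Fin (n + 1) →₀ ℕ) (c : K) :
    tmap a (MvPolynomial.monomial (Finsupp.erase 0 α) c) = MvPolynomial.C c * phi a α := by
  have he0 : (Finsupp.erase (0 : Fin (n + 1)) α) 0 = 0 := Finsupp.erase_same
  have hes : ∀ k : Fin n, (Finsupp.erase (0 : Fin (n + 1)) α) k.succ = α k.succ :=
    fun k => Finsupp.erase_ne (Fin.succ_ne_zero k)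
  rw [tmap, MvPolynomial.aeval_monomial,
    Finsupp.prod_fintype _ _ (fun i => pow_zero _), Fin.prod_univ_succ]
  simp only [Fin.cases_zero, Fin.cases_succ, he0, hes, pow_zero, one_mul]
  rw [MvPolynomial.algebraMap_eq, phi]


end Aux

theorem strict_transform_order_le {K : Type} [Field K] {n : ℕ}
    (f : MvPowerSeries (Fin (n + 1)) K) (hf : f ≠ 0) (m : ℕ)
    (hm₁ : ∃ α, deg α = m ∧ MvPowerSeries.coeff α f ≠ 0)
    (hm₂ : ∀ α, MvPowerSeries.coeff α f ≠ 0 → m ≤ deg α)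
    (a : Fin n → K) :
    ∃ g : MvPowerSeries (Fin (n + 1)) K,
      mySubst (chartS a) f = MvPowerSeries.X 0 ^ m * g ∧
      ∃ β, MvPowerSeries.coeff β g ≠ 0 ∧ deg β ≤ m := by
  classical
  set F := mySubst (chartS a) f with hF
  have hvan : ∀ β : Fin (n + 1) →₀ ℕ, β 0 < m → MvPowerSeries.coeff β F = 0 := by
    intro β hβ
    rw [hF, coeff_F]
    apply Finset.sum_eq_zero
    intro α hα
    rw [Finset.mem_filter] at hα
    have hz : MvPowerSeries.coeff α f = 0 := by
      by_contra hc
      have := hm₂ α hc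
      omega
    rw [hz, zero_mul]
  obtain ⟨g, hg⟩ := MvPowerSeries.X_pow_dvd_iff.2 hvan
  refine ⟨g, hg, ?_⟩
  obtain ⟨α₀, hα₀m, hα₀⟩ := hm₁
  set S := (expBox (Fin (n + 1)) m).filter (fun α => deg α = m) with hS
  have hα₀S : α₀ ∈ S := Finset.mem_filter.2
    ⟨mem_expBox.2 (fun i => le_of_le_of_eq (apply_le_deg _ i) hα₀m), hα₀m⟩
  set R : MvPolynomial (Fin (n + 1)) K :=
    ∑ α ∈ S, MvPolynomial.monomial (Finsupp.erase 0 α) (MvPowerSeries.coeff α f) with hRdef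
  have hRcoeff : MvPolynomial.coeff (Finsupp.erase 0 α₀) R = MvPowerSeries.coeff α₀ f := by
    rw [hRdef, MvPolynomial.coeff_sum, Finset.sum_eq_single_of_mem α₀ hα₀S]
    · rw [MvPolynomial.coeff_monomial, if_pos rfl]
    · intro α hαS hne
      rw [MvPolynomial.coeff_monomial, if_neg]
      intro heq
      apply hne
      have hdegα : deg α = m := (Finset.mem_filter.1 hαS).2
      have hsucc : ∀ k : Fin n, α k.succ = α₀ k.succ := by
        intro k
        have h3 := DFunLike.congr_fun heq k.succ
        rwa [Finsupp.erase_ne (Fin.succ_ne_zero k),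
          Finsupp.erase_ne (Fin.succ_ne_zero k)] at h3
      have h1 : α 0 + ∑ k : Fin n, α k.succ = m := by
        rw [← Fin.sum_univ_succ]; exact hdegα
      have h2 : α₀ 0 + ∑ k : Fin n, α₀ k.succ = m := by
        rw [← Fin.sum_univ_succ]; exact hα₀m
      have h4 : ∑ k : Fin n, α k.succ = ∑ k : Fin n, α₀ k.succ :=
        Finset.sum_congr rfl fun k _ => hsucc k
      have h0 : α 0 = α₀ 0 := by omega
      ext i
      exact Fin.cases h0 hsucc i
  have hR : R ≠ 0 := fun h => hα₀ (by rw [← hRcoeff, h, MvPolynomial.coeff_zero])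
  set Q := tmap a R with hQdef
  have hQ0 : Q ≠ 0 := fun h => hR (tmap_inj a (by rw [map_zero]; exact h))
  have hQform : Q = ∑ α ∈ S, MvPolynomial.C (MvPowerSeries.coeff α f) * phi a α := by
    rw [hQdef, hRdef, map_sum]
    exact Finset.sum_congr rfl fun α _ => tmap_monomial a α _
  have hQmem : Q ∈ MvPolynomial.supported K {i : Fin (n + 1) | i ≠ 0} := by
    rw [hQform]
    refine Subalgebra.sum_mem _ fun α _ => Subalgebra.mul_mem _ ?_ (phi_mem a α)
    rw [← MvPolynomial.algebraMap_eq]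
    exact Subalgebra.algebraMap_mem _ _
  have hQdeg : Q.totalDegree ≤ m := by
    rw [hQform]
    refine (MvPolynomial.totalDegree_finset_sum _ _).trans (Finset.sup_le ?_)
    intro α hαS
    refine (MvPolynomial.totalDegree_mul _ _).trans ?_
    rw [MvPolynomial.totalDegree_C]
    have h1 := phi_totalDegree a α
    have hdegα : deg α = m := (Finset.mem_filter.1 hαS).2
    have h2 : α 0 + ∑ k : Fin n, α k.succ = m := by
      rw [← Fin.sum_univ_succ]; exact hdegα
    omega
  obtain ⟨γ, hγ⟩ := MvPolynomial.support_nonempty.2 hQ0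
  have hγne : MvPolynomial.coeff γ Q ≠ 0 := MvPolynomial.mem_support_iff.1 hγ
  have hγ0 : γ 0 = 0 := coeff_fst_eq_zero hQmem hγne
  have hγdeg : deg γ ≤ m := by
    have h1 := MvPolynomial.le_totalDegree hγ
    have h2 : γ.sum (fun _ e => e) = deg γ := Finsupp.sum_fintype _ _ (fun _ => rfl)
    rw [h2] at h1
    exact h1.trans hQdeg
  set β : Fin (n + 1) →₀ ℕ := γ + Finsupp.single 0 m with hβdef
  have hβ0 : β 0 = m := by simp [hβdef, hγ0]
  have herase : Finsupp.erase 0 β = γ := by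
    ext i
    by_cases hi : i = 0
    · subst hi; rw [Finsupp.erase_same, hγ0]
    · rw [Finsupp.erase_ne hi, hβdef]
      simp [Finsupp.single_apply, Ne.symm hi]
  have hdegβ : deg β = deg γ + m := by
    rw [hβdef, deg, deg]
    rw [Finset.sum_congr rfl (fun i _ => Finsupp.add_apply γ _ i), Finset.sum_add_distrib]
    congr 1
    simp [Finsupp.single_apply]
  have key : MvPowerSeries.coeff β F = MvPolynomial.coeff γ Q := by
    rw [hF, coeff_F]
    simp only [hβ0]
    rw [filter_box_eq (by omega), ← hS, herase, hQform, MvPolynomial.coeff_sum]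
    exact Finset.sum_congr rfl fun α _ => (MvPolynomial.coeff_C_mul _ _ _).symm
  have hcoeffg : MvPowerSeries.coeff γ g = MvPowerSeries.coeff β F := by
    rw [hg, coeff_X_pow_mul, if_pos (Finsupp.single_le_iff.2 (le_of_eq hβ0.symm)),
      hβdef, add_tsub_cancel_right]
  exact ⟨γ, by rw [hcoeffg, key]; exact hγne, hγdeg⟩
end

section
/- Let I be a nonzero ideal of K[[X_1,…,X_n]] and N(I) ⊂ ℕ^n its diagram of initial exponents (the set of ν(g) for 0 ≠ g ∈ I, where ν(g) is the minimal exponent in the support of g with respect to the total order on ℕ^n). Then the Hilbert–Samuel function H_I(k) = dim_K K[[X]]/(I + M^{k+1}) equals the number of lattice points α ∈ ℕ^n \ N(I) with |α| ≤ k. -/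
/- STATEMENT 9: for a nonzero ideal `I ⊆ K[[X_1,…,X_n]]`, the Hilbert–Samuel
   function `H_I(k) = dim_K K[[X]]/(I + M^{k+1})` equals the number of lattice
   points `α ∉ N(I)` with `|α| ≤ k`, where `N(I)` is the diagram of initial
   exponents of `I`. -/

open scoped Classical

/-- The key `(|α|, α_1, …, α_n)`; keys are compared lexicographically, which is
the total order on `ℕ^n` used for initial exponents. -/
noncomputable def fKey {n : ℕ} (α : Fin n →₀ ℕ) : List ℕ :=
  (deg α) :: List.ofFn fun i => α i

/-- `β` is the initial exponent `ν(g)` of `g ≠ 0`: the smallest element of the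
support of `g` for the order above. -/
def IsInitExp {K : Type} [Field K] {n : ℕ} (g : MvPowerSeries (Fin n) K)
    (β : Fin n →₀ ℕ) : Prop :=
  MvPowerSeries.coeff β g ≠ 0 ∧
    ∀ γ, MvPowerSeries.coeff γ g ≠ 0 → fKey β ≤ fKey γ

/-- The diagram of initial exponents `N(I)` of an ideal `I ⊆ K[[X]]`. -/
def diagOf {K : Type} [Field K] {n : ℕ} (I : Ideal (MvPowerSeries (Fin n) K)) :
    Set (Fin n →₀ ℕ) :=
  {β | ∃ g ∈ I, g ≠ 0 ∧ IsInitExp g β}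

/-- The maximal ideal `(X_1,…,X_n)` of `K[[X]]`. -/
noncomputable def MxI (n : ℕ) (K : Type) [Field K] : Ideal (MvPowerSeries (Fin n) K) :=
  Ideal.span (Set.range (MvPowerSeries.X : Fin n → MvPowerSeries (Fin n) K))

/-! ### Auxiliary material -/

open MvPowerSeries

section Aux

variable {K : Type} [Field K] {n : ℕ}

theorem deg_add (α β : Fin n →₀ ℕ) : deg (α + β) = deg α + deg β := by
  simp [deg, Finset.sum_add_distrib]

theorem deg_single (i : Fin n) : deg (Finsupp.single i 1) = 1 := by
  simp [deg, Finsupp.single_apply]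

theorem fKey_injective : Function.Injective (fKey (n := n)) := by
  intro α β h
  simp only [fKey, List.cons.injEq] at h
  ext i
  simpa using congrFun (List.ofFn_injective h.2) i

theorem fKey_lt_of_deg_lt {α β : Fin n →₀ ℕ} (h : deg α < deg β) : fKey α < fKey β := by
  apply List.Lex.rel h

theorem deg_le_of_coord {α : Fin n →₀ ℕ} (j : Fin n) : α j ≤ deg α :=
  Finset.single_le_sum (f := fun j => α j) (fun _ _ => Nat.zero_le _) (Finset.mem_univ j)

theorem finite_deg_le (k : ℕ) : {α : Fin n →₀ ℕ | deg α ≤ k}.Finite := by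
  apply Set.Finite.subset (Finset.Iic (Finsupp.equivFunOnFinite.symm fun _ => k)).finite_toSet
  intro α hα
  simp only [Finset.coe_Iic, Set.mem_Iic]
  intro j
  exact le_trans (deg_le_of_coord j) hα

theorem coeff_sum_monomial (s : Finset (Fin n →₀ ℕ)) (c : (Fin n →₀ ℕ) → K)
    (β : Fin n →₀ ℕ) :
    coeff β (∑ α ∈ s, c α • monomial α 1) = if β ∈ s then c β else 0 := by
  rw [map_sum]
  simp only [map_smul, coeff_monomial, smul_eq_mul, mul_ite, mul_one, mul_zero]
  exact Finset.sum_ite_eq s β c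

/-- the ideal of series of order ≥ m -/
noncomputable def ordId (n : ℕ) (K : Type) [Field K] (m : ℕ) :
    Ideal (MvPowerSeries (Fin n) K) where
  carrier := {f | ∀ α, deg α < m → coeff α f = 0}
  add_mem' := by
    intro f g hf hg α hα; simp [map_add, hf α hα, hg α hα]
  zero_mem' := by intro α hα; simp
  smul_mem' := by
    intro c f hf α hα
    rw [smul_eq_mul, coeff_mul]
    apply Finset.sum_eq_zero
    rintro ⟨β, γ⟩ hbg
    rw [Finset.HasAntidiagonal.mem_antidiagonal] at hbg
    have : deg γ < m := by
      have : deg β + deg γ = deg α := by rw [← deg_add, hbg]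
      omega
    simp [hf γ this]

theorem mem_ordId {m : ℕ} {f : MvPowerSeries (Fin n) K} :
    f ∈ ordId n K m ↔ ∀ α, deg α < m → coeff α f = 0 := Iff.rfl

theorem mul_mem_ordId {a b : ℕ} {f g : MvPowerSeries (Fin n) K}
    (hf : f ∈ ordId n K a) (hg : g ∈ ordId n K b) : f * g ∈ ordId n K (a + b) := by
  intro α hα
  rw [coeff_mul]
  apply Finset.sum_eq_zero
  rintro ⟨β, γ⟩ hbg
  rw [Finset.HasAntidiagonal.mem_antidiagonal] at hbg
  have hd : deg β + deg γ = deg α := by rw [← deg_add, hbg]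
  by_cases h1 : deg β < a
  · simp [hf β h1]
  · have : deg γ < b := by omega
    simp [hg γ this]

theorem MxI_le_ordId : MxI n K ≤ ordId n K 1 := by
  rw [MxI, Ideal.span_le]
  rintro _ ⟨i, rfl⟩
  intro α hα
  have : α = 0 := by
    have hz : ∑ i, α i = 0 := by rw [deg] at hα; omega
    ext j
    simpa using Finset.sum_eq_zero_iff.mp hz j (Finset.mem_univ j)
  subst this
  rw [MvPowerSeries.X, coeff_monomial_ne]
  intro h
  have := congrArg deg h
  rw [deg_single] at this
  simp [deg] at this

theorem pow_MxI_le_ordId (m : ℕ) : MxI n K ^ m ≤ ordId n K m := by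
  induction m with
  | zero => intro f _; intro α hα; omega
  | succ m ih =>
      rw [pow_succ]
      refine Ideal.mul_le.2 fun f hf g hg => ?_
      exact mul_mem_ordId (ih hf) (MxI_le_ordId hg)

/-- the quotient of `f` by `X i`, restricted to monomials whose minimal
variable is `i`. -/
noncomputable def divX (f : MvPowerSeries (Fin n) K) (i : Fin n) :
    MvPowerSeries (Fin n) K :=
  fun (α : Fin n →₀ ℕ) => if ((α + Finsupp.single i 1 : Fin n →₀ ℕ)) i ≠ 0 ∧ ∀ j, j < i → ((α + Finsupp.single i 1 : Fin n →₀ ℕ)) j = 0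
    then f (α + Finsupp.single i 1) else 0

theorem coeff_divX (f : MvPowerSeries (Fin n) K) (i : Fin n) (α : Fin n →₀ ℕ) :
    coeff α (divX f i) = if ((α + Finsupp.single i 1 : Fin n →₀ ℕ)) i ≠ 0 ∧
      ∀ j, j < i → ((α + Finsupp.single i 1 : Fin n →₀ ℕ)) j = 0
    then coeff (α + Finsupp.single i 1) f else 0 := rfl

theorem X_mul_divX (f : MvPowerSeries (Fin n) K) (i : Fin n) (β : Fin n →₀ ℕ) :
    coeff β (MvPowerSeries.X i * divX f i) =
    if β i ≠ 0 ∧ ∀ j, j < i → β j = 0 then coeff β f else 0 := by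
  rw [MvPowerSeries.X, coeff_monomial_mul]
  by_cases h : Finsupp.single i 1 ≤ β
  · rw [if_pos h, one_mul, coeff_divX]
    have hb : β - Finsupp.single i 1 + Finsupp.single i 1 = β := by
      ext j
      by_cases hj : j = i
      · subst hj
        have : 1 ≤ β j := by simpa using h j
        simp [Finsupp.single_apply]
        omega
      · simp [Finsupp.single_apply, Ne.symm hj]
    simp only [hb]
  · rw [if_neg h, if_neg]
    rintro ⟨h1, -⟩
    apply h
    rw [Finsupp.single_le_iff]
    omega

theorem sum_X_mul_divX (f : MvPowerSeries (Fin n) K) (hf : f 0 = 0) :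
    ∑ i, MvPowerSeries.X i * divX f i = f := by
  ext β
  rw [map_sum]
  simp only [X_mul_divX]
  by_cases hb : β = 0
  · subst hb
    rw [Finset.sum_eq_zero, coeff_apply, hf]
    intro i _
    rw [if_neg]; rintro ⟨h1, -⟩; simp at h1
  · have hsupp : β.support.Nonempty := Finsupp.support_nonempty_iff.2 hb
    set i0 := β.support.min' hsupp with hi0
    rw [Finset.sum_eq_single i0]
    · rw [if_pos]
      constructor
      · simpa using β.support.min'_mem hsupp
      · intro j hj
        by_contra hbj
        exact absurd (β.support.min'_le j (by simpa using hbj)) (by omega)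
    · intro j _ hj
      rw [if_neg]
      rintro ⟨h1, h2⟩
      rcases lt_or_gt_of_ne hj with h | h
      · exact absurd (β.support.min'_le j (by simpa using h1)) (by omega)
      · have : β i0 = 0 := h2 i0 h
        exact (Finsupp.mem_support_iff.mp (β.support.min'_mem hsupp)) this
    · intro h; exact absurd (Finset.mem_univ i0) h

theorem divX_mem_ordId {m : ℕ} {f : MvPowerSeries (Fin n) K}
    (hf : f ∈ ordId n K (m + 1)) (i : Fin n) : divX f i ∈ ordId n K m := by
  intro α hα
  rw [coeff_divX]
  split_ifs with h
  · apply hf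
    rw [deg_add, deg_single]
    omega
  · rfl

theorem ordId_le_pow_MxI (m : ℕ) : ordId n K m ≤ MxI n K ^ m := by
  induction m with
  | zero => intro f _; simp
  | succ m ih =>
      intro f hf
      have h0 : f 0 = 0 := by
        have := hf 0 (by simp [deg])
        rwa [coeff_apply] at this
      rw [← sum_X_mul_divX f h0]
      apply Ideal.sum_mem
      intro i _
      rw [pow_succ, mul_comm (MxI n K ^ m)]
      exact Ideal.mul_mem_mul (Ideal.subset_span ⟨i, rfl⟩) (ih (divX_mem_ordId hf i))

end Aux

set_option maxHeartbeats 2000000 in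
/-- **Hilbert–Samuel function via the diagram of initial exponents.** -/
theorem hilbert_samuel_eq_diagram_count {K : Type} [Field K] {n : ℕ}
    (I : Ideal (MvPowerSeries (Fin n) K)) (hI : I ≠ ⊥) (k : ℕ) :
    Module.finrank K
        (MvPowerSeries (Fin n) K ⧸ (I + MxI n K ^ (k + 1))) =
      Nat.card {α : Fin n →₀ ℕ // α ∉ diagOf I ∧ deg α ≤ k} := by
  set J : Ideal (MvPowerSeries (Fin n) K) := I + MxI n K ^ (k + 1) with hJdef
  have hfinD := finite_deg_le (n := n) k
  set D : Finset (Fin n →₀ ℕ) := hfinD.toFinset with hD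
  have hmemD : ∀ {α : Fin n →₀ ℕ}, α ∈ D ↔ deg α ≤ k := fun {α} => hfinD.mem_toFinset
  haveI hFin : Fintype {α : Fin n →₀ ℕ // α ∉ diagOf I ∧ deg α ≤ k} :=
    Set.Finite.fintype (Set.Finite.subset hfinD (fun α h => h.2))
  set φ := (Ideal.Quotient.mkₐ K J).toLinearMap with hφ
  have hker : ∀ f : MvPowerSeries (Fin n) K, f ∈ J → φ f = 0 := fun f hf =>
    Ideal.Quotient.eq_zero_iff_mem.2 hf
  have hIJ : I ≤ J := by rw [hJdef]; exact le_sup_left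
  have hMJ : MxI n K ^ (k + 1) ≤ J := by rw [hJdef]; exact le_sup_right
  -- every element decomposes over monomials of degree ≤ k
  have hdecomp : ∀ f : MvPowerSeries (Fin n) K,
      φ f = ∑ α ∈ D, coeff α f • φ (monomial α 1) := by
    intro f
    have hmem : f - ∑ α ∈ D, coeff α f • monomial α 1 ∈ MxI n K ^ (k + 1) := by
      apply ordId_le_pow_MxI
      intro β hβ
      have hβD : β ∈ D := hmemD.2 (by omega)
      rw [map_sub, coeff_sum_monomial, if_pos hβD, sub_self]
    have := hker _ (hMJ hmem)
    rw [map_sub, sub_eq_zero] at this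
    rw [this, map_sum]
    simp only [map_smul]
  set b : {α : Fin n →₀ ℕ // α ∉ diagOf I ∧ deg α ≤ k} →
      MvPowerSeries (Fin n) K ⧸ J := fun a => φ (monomial a.1 1) with hb
  -- spanning of all small monomials
  have hspan : ∀ α ∈ D, φ (monomial α 1) ∈ Submodule.span K (Set.range b) := by
    by_contra hcon
    push_neg at hcon
    set T : Finset (Fin n →₀ ℕ) :=
      D.filter (fun α => φ (monomial α 1) ∉ Submodule.span K (Set.range b)) with hT
    have hTne : T.Nonempty := by
      obtain ⟨α, hαD, hαn⟩ := hcon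
      exact ⟨α, Finset.mem_filter.2 ⟨hαD, hαn⟩⟩
    obtain ⟨α, hαT, hαmax⟩ := T.exists_max_image (fun γ => fKey γ) hTne
    obtain ⟨hαD, hαn⟩ := Finset.mem_filter.1 hαT
    by_cases hdiag : α ∈ diagOf I
    · obtain ⟨g, hgI, hgne, hinit⟩ := hdiag
      set c := coeff α g with hc
      have hcne : c ≠ 0 := hinit.1
      set h : MvPowerSeries (Fin n) K := monomial α 1 - c⁻¹ • g with hh
      have heq : φ (monomial α 1) = φ h := by
        have : monomial α 1 - h ∈ J := by
          rw [hh]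
          have : monomial α 1 - (monomial α 1 - c⁻¹ • g) = c⁻¹ • g := by ring
          rw [this]
          exact hIJ (Submodule.smul_of_tower_mem _ _ hgI)
        have h0 := hker _ this
        rw [map_sub, sub_eq_zero] at h0
        exact h0
      apply hαn
      rw [heq, hdecomp h]
      apply Submodule.sum_mem
      intro β hβD
      by_cases hcoeff : coeff β h = 0
      · rw [hcoeff, zero_smul]; exact Submodule.zero_mem _
      apply Submodule.smul_mem
      -- β ≠ α and fKey α < fKey β
      have hβα : β ≠ α := by
        intro hba; subst hba
        apply hcoeff
        rw [hh, map_sub, map_smul, coeff_monomial_same, smul_eq_mul, ← hc,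
          inv_mul_cancel₀ hcne, sub_self]
      have hgβ : coeff β g ≠ 0 := by
        intro hz
        apply hcoeff
        rw [hh, map_sub, map_smul, coeff_monomial_ne hβα, hz, smul_zero, sub_zero]
      have hkey : fKey α < fKey β :=
        lt_of_le_of_ne (hinit.2 β hgβ) (fun he => hβα (fKey_injective he).symm)
      -- maximality: β ∉ T
      have hβT : β ∉ T := fun hmem => absurd (hαmax β hmem) (not_le.2 hkey)
      rw [hT, Finset.mem_filter] at hβT
      push_neg at hβT
      exact not_not.1 (fun hcontra => hcontra (hβT hβD))
    · exact hαn (Submodule.subset_span ⟨⟨α, hdiag, hmemD.1 hαD⟩, rfl⟩)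
  have htop : ⊤ ≤ Submodule.span K (Set.range b) := by
    intro q _
    obtain ⟨f, rfl⟩ := Ideal.Quotient.mk_surjective q
    have : (Ideal.Quotient.mk J) f = φ f := rfl
    rw [this, hdecomp f]
    apply Submodule.sum_mem
    intro α hα
    exact Submodule.smul_mem _ _ (hspan α hα)
  have hli : LinearIndependent K b := by
    rw [Fintype.linearIndependent_iff]
    intro g hg
    by_contra hcon
    push_neg at hcon
    set T : Finset {α : Fin n →₀ ℕ // α ∉ diagOf I ∧ deg α ≤ k} :=
      Finset.univ.filter (fun a => g a ≠ 0) with hT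
    have hTne : T.Nonempty := by
      obtain ⟨a, ha⟩ := hcon
      exact ⟨a, Finset.mem_filter.2 ⟨Finset.mem_univ a, ha⟩⟩
    obtain ⟨a0, ha0T, ha0min⟩ := T.exists_min_image (fun a => fKey a.1) hTne
    have hga0 : g a0 ≠ 0 := (Finset.mem_filter.1 ha0T).2
    set f : MvPowerSeries (Fin n) K := ∑ a, g a • monomial a.1 1 with hf
    have hcoefff : ∀ β, coeff β f =
        ∑ a, if β = a.1 then g a else 0 := by
      intro β
      rw [hf, map_sum]
      simp only [map_smul, coeff_monomial, smul_eq_mul, mul_ite, mul_one, mul_zero]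
    have hfa0 : coeff a0.1 f = g a0 := by
      rw [hcoefff, Finset.sum_eq_single a0]
      · rw [if_pos rfl]
      · intro a _ hne
        rw [if_neg]
        intro he; exact hne (Subtype.ext he.symm)
      · intro hmem; exact absurd (Finset.mem_univ a0) hmem
    have hfJ : f ∈ J := by
      have : φ f = 0 := by
        rw [hf, map_sum]
        simp only [map_smul]
        exact hg
      exact Ideal.Quotient.eq_zero_iff_mem.1 this
    rw [hJdef, Ideal.add_eq_sup, Submodule.mem_sup] at hfJ
    obtain ⟨p, hpI, q, hq, hpq⟩ := hfJ
    have hqo : q ∈ ordId n K (k + 1) := pow_MxI_le_ordId _ hq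
    have hpa0 : coeff a0.1 p = g a0 := by
      have hq0 : coeff a0.1 q = 0 := hqo a0.1 (by have := a0.2.2; omega)
      have := congrArg (coeff a0.1) hpq
      rw [map_add, hq0, add_zero] at this
      rw [this, hfa0]
    have hpne : p ≠ 0 := by
      intro h0
      rw [h0, map_zero] at hpa0
      exact hga0 hpa0.symm
    have hinit : IsInitExp p a0.1 := by
      constructor
      · rw [hpa0]; exact hga0
      · intro γ hγ
        by_cases hdγ : deg γ ≤ k
        · have hqγ : coeff γ q = 0 := hqo γ (by omega)
          have hfγ : coeff γ f ≠ 0 := by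
            have := congrArg (coeff γ) hpq
            rw [map_add, hqγ, add_zero] at this
            rw [← this]; exact hγ
          rw [hcoefff] at hfγ
          obtain ⟨a, -, ha⟩ := Finset.exists_ne_zero_of_sum_ne_zero hfγ
          have hγa : γ = a.1 := by
            by_contra hne; rw [if_neg hne] at ha; exact ha rfl
          have hgane : g a ≠ 0 := by
            rw [if_pos hγa] at ha; exact ha
          have haT : a ∈ T := Finset.mem_filter.2 ⟨Finset.mem_univ a, hgane⟩
          rw [hγa]
          exact ha0min a haT
        · exact le_of_lt (fKey_lt_of_deg_lt (by have := a0.2.2; omega))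
    exact a0.2.1 ⟨p, hpI, hpne, hinit⟩
  rw [Module.finrank_eq_card_basis (Module.Basis.mk hli htop), Nat.card_eq_fintype_card]
end
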